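/- The minimum-energy curve E_min(ℰ) along the Gibbs family is convex: its second derivative with respect to ℰ equals -(1/β²)·(dβ/dℰ), which is positive since β is a strictly decreasing function of ℰ on (ln d_g, ln N). -/

import Mathlib

/-- Partition function of the classical Gibbs distribution. -/
noncomputable def gibbsZ (N : ℕ) (E : Fin N → ℝ) (β : ℝ) : ℝ :=
  ∑ i, Real.exp (-β * E i)

/-- Mean energy `⟨H⟩(β)` of the classical Gibbs distribution. -/
noncomputable def gibbsAvgH (N : ℕ) (E : Fin N → ℝ) (β : ℝ) : ℝ :=
  ∑ i, (Real.exp (-β * E i) / gibbsZ N E β) * E i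

/-- Shannon entropy `S(β)` of the classical Gibbs distribution. -/
noncomputable def gibbsEntropy (N : ℕ) (E : Fin N → ℝ) (β : ℝ) : ℝ :=
  -∑ i, (Real.exp (-β * E i) / gibbsZ N E β) *
    Real.log (Real.exp (-β * E i) / gibbsZ N E β)

/-- Multiplicity `d_g` of the minimum energy. -/
noncomputable def groundDeg (N : ℕ) (E : Fin N → ℝ) : ℕ :=
  (Finset.univ.filter fun i : Fin N => ∀ j, E i ≤ E j).card

noncomputable def gW (N : ℕ) (E : Fin N → ℝ) (β : ℝ) : ℝ :=
  ∑ i, E i * Real.exp (-β * E i)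

noncomputable def gU (N : ℕ) (E : Fin N → ℝ) (β : ℝ) : ℝ :=
  ∑ i, (E i)^2 * Real.exp (-β * E i)

noncomputable def gV (N : ℕ) (E : Fin N → ℝ) (β : ℝ) : ℝ :=
  gU N E β / gibbsZ N E β - (gW N E β / gibbsZ N E β)^2

section aux
variable {N : ℕ} {E : Fin N → ℝ}

lemma Z_pos (hN : 0 < N) (β : ℝ) : 0 < gibbsZ N E β := by
  apply Finset.sum_pos (fun i _ => Real.exp_pos _)
  simpa [Finset.univ_nonempty_iff, ← Fin.pos_iff_nonempty]

lemma hasDerivAt_exp_term (i : Fin N) (β : ℝ) :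
    HasDerivAt (fun b => Real.exp (-b * E i)) (-(E i * Real.exp (-β * E i))) β := by
  have h : HasDerivAt (fun b : ℝ => -b * E i) (-1 * E i) β :=
    (hasDerivAt_id β).neg.mul_const (E i)
  simpa [mul_comm] using h.exp

lemma hasDerivAt_Z (β : ℝ) : HasDerivAt (gibbsZ N E) (-gW N E β) β := by
  have h := HasDerivAt.fun_sum (fun i (_ : i ∈ Finset.univ) => hasDerivAt_exp_term (E := E) i β)
  have hz : gibbsZ N E = fun b => ∑ i, Real.exp (-b * E i) := rfl
  rw [hz]
  simpa [gW, Finset.sum_neg_distrib] using h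

lemma hasDerivAt_W (β : ℝ) : HasDerivAt (gW N E) (-gU N E β) β := by
  have h := HasDerivAt.fun_sum (fun i (_ : i ∈ Finset.univ) =>
    (hasDerivAt_exp_term (E := E) i β).const_mul (E i))
  have hw : gW N E = fun b => ∑ i, E i * Real.exp (-b * E i) := rfl
  rw [hw]
  have hterm : ∀ i : Fin N, E i * -(E i * Real.exp (-β * E i)) = -((E i)^2 * Real.exp (-β * E i)) := by
    intro i; ring
  have h2 : HasDerivAt (fun b => ∑ i, E i * Real.exp (-b * E i))
      (∑ i, -((E i)^2 * Real.exp (-β * E i))) β := by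
    refine HasDerivAt.congr_deriv h ?_
    exact Finset.sum_congr rfl fun i _ => hterm i
  simpa [gU, Finset.sum_neg_distrib] using h2

lemma avgH_eq (β : ℝ) : gibbsAvgH N E β = gW N E β / gibbsZ N E β := by
  rw [gibbsAvgH, gW, Finset.sum_div]
  exact Finset.sum_congr rfl fun i _ => by ring

lemma sum_p_eq_one (hN : 0 < N) (β : ℝ) :
    ∑ i, Real.exp (-β * E i) / gibbsZ N E β = 1 := by
  rw [← Finset.sum_div, ← gibbsZ, div_self (Z_pos hN β).ne']

lemma hasDerivAt_A (hN : 0 < N) (β : ℝ) :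
    HasDerivAt (gibbsAvgH N E) (-gV N E β) β := by
  have hZ := Z_pos (E := E) hN β
  have h := (hasDerivAt_W (E := E) β).div (hasDerivAt_Z β) hZ.ne'
  have heq : gibbsAvgH N E = fun b => gW N E b / gibbsZ N E b := funext fun b => avgH_eq b
  rw [heq]
  refine h.congr_deriv ?_
  rw [gV]
  field_simp
  ring

lemma V_pos (hN : 0 < N) (hE : ∃ i j, E i ≠ E j) (β : ℝ) : 0 < gV N E β := by
  have hZ := Z_pos (E := E) hN β
  set A := gibbsAvgH N E β with hA
  have key : gV N E β = ∑ i, (Real.exp (-β * E i) / gibbsZ N E β) * (E i - A)^2 := by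
    have expand : ∀ i : Fin N,
        (Real.exp (-β * E i) / gibbsZ N E β) * (E i - A)^2
          = (E i)^2 * Real.exp (-β * E i) / gibbsZ N E β
            - 2 * A * ((Real.exp (-β * E i) / gibbsZ N E β) * E i)
            + A^2 * (Real.exp (-β * E i) / gibbsZ N E β) := by
      intro i; ring
    rw [Finset.sum_congr rfl fun i _ => expand i]
    rw [Finset.sum_add_distrib, Finset.sum_sub_distrib, ← Finset.mul_sum, ← Finset.mul_sum,
      ← gibbsAvgH, ← hA, sum_p_eq_one hN, ← Finset.sum_div, ← gU]
    rw [gV, hA, avgH_eq, div_pow]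
    ring
  rw [key]
  obtain ⟨i, j, hij⟩ := hE
  have hne : E i ≠ A ∨ E j ≠ A := by
    by_contra h
    push_neg at h
    exact hij (h.1.trans h.2.symm)
  have pos_term : ∀ k : Fin N, E k ≠ A →
      0 < (Real.exp (-β * E k) / gibbsZ N E β) * (E k - A)^2 := by
    intro k hk
    exact mul_pos (div_pos (Real.exp_pos _) hZ)
      ((sq_nonneg _).lt_of_ne' (pow_ne_zero 2 (sub_ne_zero.mpr hk)))
  have nonneg : ∀ k ∈ Finset.univ, 0 ≤ (Real.exp (-β * E k) / gibbsZ N E β) * (E k - A)^2 :=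
    fun k _ => mul_nonneg (div_pos (Real.exp_pos _) hZ).le (sq_nonneg _)
  rcases hne with h | h
  · exact Finset.sum_pos' nonneg ⟨i, Finset.mem_univ i, pos_term i h⟩
  · exact Finset.sum_pos' nonneg ⟨j, Finset.mem_univ j, pos_term j h⟩

lemma entropy_eq (hN : 0 < N) (β : ℝ) :
    gibbsEntropy N E β = β * gibbsAvgH N E β + Real.log (gibbsZ N E β) := by
  have hZ := Z_pos (E := E) hN β
  have hlog : ∀ i : Fin N, Real.log (Real.exp (-β * E i) / gibbsZ N E β)
      = -β * E i - Real.log (gibbsZ N E β) := by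
    intro i
    rw [Real.log_div (Real.exp_ne_zero _) hZ.ne', Real.log_exp]
  rw [gibbsEntropy]
  rw [Finset.sum_congr rfl fun i _ => by rw [hlog i]]
  have expand : ∀ i : Fin N,
      (Real.exp (-β * E i) / gibbsZ N E β) * (-β * E i - Real.log (gibbsZ N E β))
        = -(β * ((Real.exp (-β * E i) / gibbsZ N E β) * E i))
          - Real.log (gibbsZ N E β) * (Real.exp (-β * E i) / gibbsZ N E β) := by
    intro i; ring
  rw [Finset.sum_congr rfl fun i _ => expand i, Finset.sum_sub_distrib,
    Finset.sum_neg_distrib, ← Finset.mul_sum, ← Finset.mul_sum, ← gibbsAvgH,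
    sum_p_eq_one hN]
  ring

lemma hasDerivAt_S (hN : 0 < N) (β : ℝ) :
    HasDerivAt (gibbsEntropy N E) (-β * gV N E β) β := by
  have hZ := Z_pos (E := E) hN β
  have h := ((hasDerivAt_id β).mul (hasDerivAt_A (E := E) hN β)).add
    ((hasDerivAt_Z (E := E) β).log hZ.ne')
  simp only [id_eq] at h
  have heq : gibbsEntropy N E = fun b => b * gibbsAvgH N E b + Real.log (gibbsZ N E b) :=
    funext fun b => entropy_eq hN b
  rw [heq]
  refine h.congr_deriv ?_
  rw [avgH_eq]
  field_simp
  ring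
end aux

/-- with `β(ℰ) = binv ℰ` the inverse of the Gibbs entropy, the
minimum-energy curve `E_min = ⟨H⟩ ∘ binv` has second derivative
`E_min''(ℰ) = -β(ℰ)⁻² · β'(ℰ) > 0` (since `β` is strictly decreasing in `ℰ`),
hence `E_min` is strictly convex on `(ln d_g, ln N)`. -/
theorem stmt_15 (N : ℕ) (hN : 0 < N) (E : Fin N → ℝ) (hE : ∃ i j, E i ≠ E j)
    (binv : ℝ → ℝ)
    (hbinv : ∀ ℰ ∈ Set.Ioo (Real.log (groundDeg N E)) (Real.log N),
      0 < binv ℰ ∧ gibbsEntropy N E (binv ℰ) = ℰ) :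
    (∀ ℰ ∈ Set.Ioo (Real.log (groundDeg N E)) (Real.log N),
        deriv (deriv (fun x => gibbsAvgH N E (binv x))) ℰ
            = -(binv ℰ) ^ (-2 : ℤ) * deriv binv ℰ ∧
          0 < deriv (deriv (fun x => gibbsAvgH N E (binv x))) ℰ) ∧
      StrictConvexOn ℝ (Set.Ioo (Real.log (groundDeg N E)) (Real.log N))
        (fun x => gibbsAvgH N E (binv x)) := by
  set lo := Real.log (groundDeg N E)
  set hi := Real.log (N : ℝ)
  -- entropy is strictly antitone on [0, ∞)
  have hanti : StrictAntiOn (gibbsEntropy N E) (Set.Ici 0) := by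
    apply strictAntiOn_of_deriv_neg (convex_Ici 0)
    · exact fun x _ => (hasDerivAt_S hN x).continuousAt.continuousWithinAt
    · intro x hx
      rw [interior_Ici] at hx
      rw [(hasDerivAt_S hN x).deriv]
      exact mul_neg_of_neg_of_pos (neg_neg_iff_pos.mpr hx) (V_pos hN hE x)
  -- main derivative facts at each point of the interval
  have hmain : ∀ ℰ0 ∈ Set.Ioo lo hi,
      HasDerivAt (fun x => gibbsAvgH N E (binv x)) (binv ℰ0)⁻¹ ℰ0 ∧
      HasDerivAt binv (-(binv ℰ0) * gV N E (binv ℰ0))⁻¹ ℰ0 := by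
    intro ℰ0 hℰ0
    obtain ⟨hβ0, hS0⟩ := hbinv ℰ0 hℰ0
    set β0 := binv ℰ0 with hβ0def
    have hV0 := V_pos hN hE β0
    have hS'neg : -β0 * gV N E β0 < 0 :=
      mul_neg_of_neg_of_pos (neg_neg_iff_pos.mpr hβ0) hV0
    -- continuity of binv at ℰ0
    have hcont : ContinuousAt binv ℰ0 := by
      rw [ContinuousAt, Metric.tendsto_nhds]
      intro ε hε
      set ε' := min (ε / 2) (β0 / 2) with hε'def
      have hε' : 0 < ε' := lt_min (by linarith) (by linarith)
      have hε'le : ε' ≤ ε / 2 := min_le_left _ _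
      have ha : 0 < β0 - ε' := by
        have h2 : ε' ≤ β0 / 2 := min_le_right _ _
        linarith
      have hSa : ℰ0 < gibbsEntropy N E (β0 - ε') := by
        have := hanti (Set.mem_Ici.mpr ha.le) (Set.mem_Ici.mpr hβ0.le) (by linarith)
        rwa [hS0] at this
      have hSb : gibbsEntropy N E (β0 + ε') < ℰ0 := by
        have := hanti (Set.mem_Ici.mpr hβ0.le)
          (Set.mem_Ici.mpr (by linarith : (0:ℝ) ≤ β0 + ε')) (by linarith)
        rwa [hS0] at this
      filter_upwards [Ioo_mem_nhds (max_lt hSb hℰ0.1) (lt_min hSa hℰ0.2)] with x hx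
      have hxI : x ∈ Set.Ioo lo hi :=
        ⟨lt_of_le_of_lt (le_max_right _ _) hx.1, lt_of_lt_of_le hx.2 (min_le_right _ _)⟩
      obtain ⟨hbx, hSx⟩ := hbinv x hxI
      have hxSb : gibbsEntropy N E (β0 + ε') < x := lt_of_le_of_lt (le_max_left _ _) hx.1
      have hxSa : x < gibbsEntropy N E (β0 - ε') := lt_of_lt_of_le hx.2 (min_le_left _ _)
      have hub : binv x < β0 + ε' := by
        by_contra h
        push_neg at h
        have := hanti.antitoneOn (Set.mem_Ici.mpr (by linarith : (0:ℝ) ≤ β0 + ε'))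
          (Set.mem_Ici.mpr hbx.le) h
        rw [hSx] at this
        linarith
      have hlb : β0 - ε' < binv x := by
        by_contra h
        push_neg at h
        have := hanti.antitoneOn (Set.mem_Ici.mpr hbx.le) (Set.mem_Ici.mpr ha.le) h
        rw [hSx] at this
        linarith
      rw [Real.dist_eq, abs_sub_lt_iff]
      constructor <;> linarith
    -- derivative of binv via inverse function theorem
    have hfg : ∀ᶠ y in nhds ℰ0, gibbsEntropy N E (binv y) = y := by
      filter_upwards [Ioo_mem_nhds hℰ0.1 hℰ0.2] with y hy
      exact (hbinv y hy).2
    have hbderiv : HasDerivAt binv (-β0 * gV N E β0)⁻¹ ℰ0 :=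
      HasDerivAt.of_local_left_inverse hcont (hasDerivAt_S hN β0) hS'neg.ne hfg
    refine ⟨?_, hbderiv⟩
    have h := (hasDerivAt_A (E := E) hN β0).comp ℰ0 hbderiv
    refine h.congr_deriv ?_
    have hb' := hβ0.ne'
    have hv' := hV0.ne'
    field_simp
  have key : ∀ ℰ0 ∈ Set.Ioo lo hi,
      deriv (deriv (fun x => gibbsAvgH N E (binv x))) ℰ0
          = -(binv ℰ0) ^ (-2 : ℤ) * deriv binv ℰ0 ∧
        0 < deriv (deriv (fun x => gibbsAvgH N E (binv x))) ℰ0 := by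
    intro ℰ0 hℰ0
    obtain ⟨hβ0, hS0⟩ := hbinv ℰ0 hℰ0
    have hV0 := V_pos hN hE (binv ℰ0)
    obtain ⟨hEmin, hbderiv⟩ := hmain ℰ0 hℰ0
    have hev : deriv (fun x => gibbsAvgH N E (binv x)) =ᶠ[nhds ℰ0] fun x => (binv x)⁻¹ := by
      filter_upwards [Ioo_mem_nhds hℰ0.1 hℰ0.2] with x hx
      exact (hmain x hx).1.deriv
    have hinv : HasDerivAt (fun x => (binv x)⁻¹)
        (-(-(binv ℰ0) * gV N E (binv ℰ0))⁻¹ / (binv ℰ0) ^ 2) ℰ0 :=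
      hbderiv.inv hβ0.ne'
    have hd2 : deriv (deriv (fun x => gibbsAvgH N E (binv x))) ℰ0
        = -(-(binv ℰ0) * gV N E (binv ℰ0))⁻¹ / (binv ℰ0) ^ 2 := by
      rw [hev.deriv_eq]
      exact hinv.deriv
    have hbdval : deriv binv ℰ0 = (-(binv ℰ0) * gV N E (binv ℰ0))⁻¹ := hbderiv.deriv
    have hbneg : (-(binv ℰ0) * gV N E (binv ℰ0))⁻¹ < 0 :=
      inv_neg''.mpr (mul_neg_of_neg_of_pos (neg_neg_iff_pos.mpr hβ0) hV0)
    constructor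
    · have hb := hβ0.ne'
      have hV := hV0.ne'
      rw [hd2, hbdval, zpow_neg, show ((2:ℤ)) = ((2:ℕ):ℤ) from rfl, zpow_natCast]
      field_simp
    · rw [hd2]
      exact div_pos (neg_pos.mpr hbneg) (pow_pos hβ0 2)
  refine ⟨key, ?_⟩
  apply strictConvexOn_of_deriv2_pos (convex_Ioo lo hi)
  · exact fun x hx => ((hmain x hx).1).continuousAt.continuousWithinAt
  · intro x hx
    rw [interior_Ioo] at hx
    exact (key x hx).2
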